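/- Let ≤ be a tree order on a finite set V, let G be its comparability graph, and let C ≥ 1, D ≥ 0 be integers. If G admits a (C,D)-coloring, then G admits a (C,D)-coloring c that is monotone with respect to ≤, i.e., v ≤ u implies c(v) ≤ c(u). -/

import Mathlib

/-- The deficiency of a vertex `v` under a coloring `c`: the number of neighbors
of `v` whose color equals `c v`. -/
noncomputable def deficiency {V α : Type*} (G : SimpleGraph V) (c : V → α) (v : V) : ℕ :=
  {w | G.Adj v w ∧ c w = c v}.ncard

/-- `c` is a `(C,D)`-coloring (with colors `Fin C`): every vertex has at most `D`
neighbors of its own color. -/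
def IsDefColoring {V α : Type*} (G : SimpleGraph V) (D : ℕ) (c : V → α) : Prop :=
  ∀ v, deficiency G c v ≤ D

/-- A partial order is a tree order if every up-set `{w | v ≤ w}` is a chain. -/
def IsTreeOrder (V : Type*) [PartialOrder V] : Prop :=
  ∀ v : V, IsChain (· ≤ ·) {w | v ≤ w}

/-- The comparability graph of a partial order: `u` and `v` are adjacent iff they are
distinct and comparable. -/
def compGraph (V : Type*) [PartialOrder V] : SimpleGraph V where
  Adj u v := u ≠ v ∧ (u ≤ v ∨ v ≤ u)
  symm := by
    constructor
    intro u v h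
    exact ⟨h.1.symm, h.2.symm⟩
  loopless := by
    constructor
    intro v h
    exact h.1 rfl

noncomputable section
open Classical

set_option linter.unusedSectionVars false

variable {V : Type*} [Fintype V] [PartialOrder V]

def dn (v : V) : Finset V := Finset.univ.filter (fun w => w < v)

def dcl (v : V) : Finset V := Finset.univ.filter (fun w => w ≤ v)

lemma mem_dn {w v : V} : w ∈ dn v ↔ w < v := by simp [dn]
lemma mem_dcl {w v : V} : w ∈ dcl v ↔ w ≤ v := by simp [dcl]

lemma dcl_eq_insert (v : V) : dcl v = insert v (dn v) := by
  ext w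
  simp only [mem_dcl, Finset.mem_insert, mem_dn]
  constructor
  · intro h; rcases eq_or_lt_of_le h with rfl | h'
    · exact Or.inl rfl
    · exact Or.inr h'
  · rintro (rfl | h); exacts [le_rfl, h.le]

lemma v_not_mem_dn (v : V) : v ∉ dn v := by simp [mem_dn]

def tower (D : ℕ) : ℕ → Finset V
  | 0 => Finset.univ
  | i+1 => Finset.univ.filter (fun v => D < ((tower D i).filter (fun w => w < v)).card)

lemma mem_tower_succ {D i : ℕ} {v : V} :
    v ∈ tower D (i+1) ↔ D < ((tower D i).filter (fun w => w < v)).card := by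
  simp [tower]

lemma tower_upset (D : ℕ) : ∀ (i : ℕ) {v u : V}, v ∈ tower D i → v ≤ u → u ∈ tower D i := by
  intro i
  induction i with
  | zero => intro v u _ _; simp [tower]
  | succ i _ =>
    intro v u hv hvu
    rw [mem_tower_succ] at hv ⊢
    refine lt_of_lt_of_le hv (Finset.card_le_card ?_)
    intro w hw
    simp only [Finset.mem_filter] at hw ⊢
    exact ⟨hw.1, lt_of_lt_of_le hw.2 hvu⟩

lemma tower_succ_subset (D i : ℕ) : (tower D (i+1) : Finset V) ⊆ tower D i := by
  intro v hv
  rw [mem_tower_succ] at hv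
  have hne : ((tower D i).filter (fun w => w < v)).Nonempty := by
    rw [← Finset.card_pos]; omega
  obtain ⟨w, hw⟩ := hne
  simp only [Finset.mem_filter] at hw
  exact tower_upset D i hw.1 hw.2.le

lemma tower_anti (D : ℕ) {i j : ℕ} (h : i ≤ j) : (tower D j : Finset V) ⊆ tower D i := by
  induction j with
  | zero => simp_all
  | succ j ih =>
    rcases Nat.lt_or_ge i (j+1) with h' | h'
    · exact (tower_succ_subset D j).trans (ih (by omega))
    · have : i = j + 1 := by omega
      subst this; exact fun _ h => h

lemma comp_of_le_le (htree : IsTreeOrder V) {w z₁ z₂ : V} (h1 : w ≤ z₁) (h2 : w ≤ z₂) :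
    z₁ ≤ z₂ ∨ z₂ ≤ z₁ := by
  rcases eq_or_ne z₁ z₂ with rfl | hne
  · exact Or.inl le_rfl
  · exact htree w h1 h2 hne

lemma exists_le_maximal (T : Finset V) {t : V} (ht : t ∈ T) :
    ∃ z ∈ T, t ≤ z ∧ ∀ y ∈ T, ¬ z < y := by
  obtain ⟨m, hm, hmax⟩ : ∃ m ∈ T.filter (fun y => t ≤ y), ∀ x ∈ T.filter (fun y => t ≤ y), ¬ m < x := by
    obtain ⟨m, hm⟩ := Finset.exists_maximal (s := T.filter (fun y => t ≤ y)) ⟨t, by simp [ht]⟩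
    exact ⟨m, hm.1, fun x hx hlt => hlt.not_ge (hm.2 hx hlt.le)⟩
  simp only [Finset.mem_filter] at hm
  refine ⟨m, hm.1, hm.2, ?_⟩
  intro y hy hlt
  exact hmax y (by simp [hy, hm.2.trans hlt.le]) hlt

lemma filter_le_card_of_mem {T : Finset V} {z : V} (hz : z ∈ T) :
    (T.filter (fun w => w ≤ z)).card = (T.filter (fun w => w < z)).card + 1 := by
  have : T.filter (fun w => w ≤ z) = insert z (T.filter (fun w => w < z)) := by
    ext w
    simp only [Finset.mem_filter, Finset.mem_insert]
    constructor
    · rintro ⟨hw, hle⟩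
      rcases eq_or_lt_of_le hle with rfl | hlt
      · exact Or.inl rfl
      · exact Or.inr ⟨hw, hlt⟩
    · rintro (rfl | ⟨hw, hlt⟩)
      · exact ⟨hz, le_rfl⟩
      · exact ⟨hw, hlt.le⟩
  rw [this, Finset.card_insert_of_notMem (by simp)]

lemma pigeon (htree : IsTreeOrder V) (T G : Finset V) (hcard : G.card < T.card) :
    ∃ z ∈ T, (∀ y ∈ T, ¬ z < y) ∧
      (G.filter (fun w => w ≤ z)).card ≤ (T.filter (fun w => w < z)).card := by
  by_contra hcon
  push_neg at hcon
  set M : Finset V := T.filter (fun z => ∀ y ∈ T, ¬ z < y) with hM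
  have hcover : T ⊆ M.biUnion (fun z => T.filter (fun w => w ≤ z)) := by
    intro t ht
    obtain ⟨z, hzT, htz, hzmax⟩ := exists_le_maximal T ht
    refine Finset.mem_biUnion.2 ⟨z, ?_, by simp [ht, htz]⟩
    simp only [hM, Finset.mem_filter]
    exact ⟨hzT, hzmax⟩
  have hdisj : ∀ z₁ ∈ M, ∀ z₂ ∈ M, z₁ ≠ z₂ →
      Disjoint (G.filter (fun w => w ≤ z₁)) (G.filter (fun w => w ≤ z₂)) := by
    intro z₁ hz₁ z₂ hz₂ hne
    simp only [hM, Finset.mem_filter] at hz₁ hz₂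
    rw [Finset.disjoint_left]
    intro w hw₁ hw₂
    simp only [Finset.mem_filter] at hw₁ hw₂
    rcases comp_of_le_le htree hw₁.2 hw₂.2 with h | h
    · rcases eq_or_lt_of_le h with rfl | hlt
      · exact hne rfl
      · exact hz₁.2 z₂ hz₂.1 hlt
    · rcases eq_or_lt_of_le h with rfl | hlt
      · exact hne rfl
      · exact hz₂.2 z₁ hz₁.1 hlt
  have h1 : T.card ≤ ∑ z ∈ M, (T.filter (fun w => w ≤ z)).card :=
    le_trans (Finset.card_le_card hcover) (Finset.card_biUnion_le)
  have h2 : ∀ z ∈ M, (T.filter (fun w => w ≤ z)).card ≤ (G.filter (fun w => w ≤ z)).card := by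
    intro z hz
    simp only [hM, Finset.mem_filter] at hz
    have := hcon z hz.1 hz.2
    rw [filter_le_card_of_mem hz.1]
    omega
  have h3 : ∑ z ∈ M, (G.filter (fun w => w ≤ z)).card ≤ G.card := by
    rw [← Finset.card_biUnion hdisj]
    exact Finset.card_le_card (Finset.biUnion_subset.2 (fun z _ => Finset.filter_subset _ _))
  have := Finset.sum_le_sum h2
  omega

/-- strict descendants of the same colour are at most `D` -/
lemma same_color_dn_le {C D : ℕ} {c : V → Fin C} (hc : IsDefColoring (compGraph V) D c)
    (v : V) : ((dn v).filter (fun w => c w = c v)).card ≤ D := by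
  have h1 := hc v
  unfold deficiency at h1
  have hsub : (((dn v).filter (fun w => c w = c v) : Finset V) : Set V) ⊆
      {w | (compGraph V).Adj v w ∧ c w = c v} := by
    intro w hw
    simp only [Finset.coe_filter, Set.mem_setOf_eq, mem_dn] at hw
    refine ⟨⟨(ne_of_lt hw.1).symm, Or.inr hw.1.le⟩, hw.2⟩
  calc ((dn v).filter (fun w => c w = c v)).card
      = (((dn v).filter (fun w => c w = c v) : Finset V) : Set V).ncard := by
        rw [Set.ncard_coe_finset]
    _ ≤ {w | (compGraph V).Adj v w ∧ c w = c v}.ncard :=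
        Set.ncard_le_ncard hsub (Set.toFinite _)
    _ ≤ D := h1

/-- key cardinality: `|S_i ∩ dn v| ≥ |S_{i+1} ∩ dn v| + D + 1` for `v ∈ S_{i+1}` -/
lemma tower_card_lower (D i : ℕ) {v : V} (hv : v ∈ tower D (i+1)) :
    ((tower D (i+1)).filter (fun w => w < v)).card + D + 1 ≤
      ((tower D i).filter (fun w => w < v)).card := by
  set T' := (tower D (i+1)).filter (fun w => w < v) with hT'
  rcases T'.eq_empty_or_nonempty with he | hne
  · rw [he]
    simp only [Finset.card_empty]
    have := mem_tower_succ.1 hv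
    omega
  · obtain ⟨u, hu, humin⟩ : ∃ u ∈ T', ∀ x ∈ T', ¬ x < u := by
      obtain ⟨u, hu⟩ := Finset.exists_minimal hne
      exact ⟨u, hu.1, fun x hx hlt => hlt.not_ge (hu.2 hx hlt.le)⟩
    have hu' : u ∈ tower D (i+1) ∧ u < v := by
      simpa only [hT', Finset.mem_filter] using hu
    set B := (tower D i).filter (fun w => w < u) with hB
    have hBcard : D < B.card := mem_tower_succ.1 hu'.1
    have hdisj : Disjoint T' B := by
      rw [Finset.disjoint_left]
      intro w hw hwB
      simp only [hB, Finset.mem_filter] at hwB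
      exact humin w hw hwB.2
    have hsub : T' ∪ B ⊆ (tower D i).filter (fun w => w < v) := by
      intro w hw
      rcases Finset.mem_union.1 hw with hw | hw
      · simp only [hT', Finset.mem_filter] at hw
        exact Finset.mem_filter.2 ⟨tower_succ_subset D i hw.1, hw.2⟩
      · simp only [hB, Finset.mem_filter] at hw
        exact Finset.mem_filter.2 ⟨hw.1, hw.2.trans hu'.2⟩
    have := Finset.card_le_card hsub
    rw [Finset.card_union_of_disjoint hdisj] at this
    omega

/-- THE MAIN LEMMA: rainbow chains avoiding a colour set. -/
lemma MLS (htree : IsTreeOrder V) {C D : ℕ} {c : V → Fin C}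
    (hc : IsDefColoring (compGraph V) D c) :
    ∀ i : ℕ, ∀ v : V, v ∈ tower D i → ∀ F : Finset (Fin C),
      ((dcl v).filter (fun w => c w ∈ F)).card ≤ ((tower D i).filter (fun w => w < v)).card →
      ∃ R : Finset V, R.card = i + 1 ∧ (∀ x ∈ R, x ≤ v) ∧
        (∀ x ∈ R, ∀ y ∈ R, x ≤ y ∨ y ≤ x) ∧ (∀ x ∈ R, ∀ y ∈ R, c x = c y → x = y) ∧
        (∀ x ∈ R, c x ∉ F) := by
  intro i
  induction i with
  | zero =>
    intro v _ F hF
    have hdclcard : (dcl v).card = (dn v).card + 1 := by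
      rw [dcl_eq_insert, Finset.card_insert_of_notMem (v_not_mem_dn v)]
    have htow0 : ((tower D 0).filter (fun w => w < v)) = dn v := by
      ext w; simp [tower, dn]
    rw [htow0] at hF
    have hex : ∃ w ∈ dcl v, c w ∉ F := by
      by_contra hcon
      push_neg at hcon
      have : (dcl v).filter (fun w => c w ∈ F) = dcl v := Finset.filter_true_of_mem hcon
      rw [this] at hF
      omega
    obtain ⟨w, hw, hwF⟩ := hex
    refine ⟨{w}, by simp, ?_, ?_, ?_, ?_⟩
    · intro x hx; rw [Finset.mem_singleton] at hx; subst hx; exact mem_dcl.1 hw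
    · intro x hx y hy
      rw [Finset.mem_singleton] at hx hy; subst hx; subst hy; exact Or.inl le_rfl
    · intro x hx y hy _
      rw [Finset.mem_singleton] at hx hy; subst hx; subst hy; rfl
    · intro x hx; rw [Finset.mem_singleton] at hx; subst hx; exact hwF
  | succ i ih =>
    suffices H : ∀ n : ℕ, ∀ v : V, (dcl v).card ≤ n → v ∈ tower D (i+1) → ∀ F : Finset (Fin C),
        ((dcl v).filter (fun w => c w ∈ F)).card ≤
          ((tower D (i+1)).filter (fun w => w < v)).card →
        ∃ R : Finset V, R.card = i + 1 + 1 ∧ (∀ x ∈ R, x ≤ v) ∧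
          (∀ x ∈ R, ∀ y ∈ R, x ≤ y ∨ y ≤ x) ∧ (∀ x ∈ R, ∀ y ∈ R, c x = c y → x = y) ∧
          (∀ x ∈ R, c x ∉ F) by
      intro v hv F hF
      exact H (dcl v).card v le_rfl hv F hF
    intro n
    induction n with
    | zero =>
      intro v hcard
      exfalso
      have : v ∈ dcl v := mem_dcl.2 le_rfl
      have := Finset.card_pos.2 ⟨v, this⟩
      omega
    | succ n ihn =>
      intro v hcard hv F hF
      have hdcl_split : (dcl v).card = (dn v).card + 1 := by
        rw [dcl_eq_insert, Finset.card_insert_of_notMem (v_not_mem_dn v)]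
      by_cases hcvF : c v ∈ F
      · -- Case B: colour of v is forbidden; recurse at same level below
        set T := (tower D (i+1)).filter (fun w => w < v) with hT
        set G := (dn v).filter (fun w => c w ∈ F) with hG
        have hsplit : ((dcl v).filter (fun w => c w ∈ F)).card = G.card + 1 := by
          rw [dcl_eq_insert, Finset.filter_insert, if_pos hcvF,
            Finset.card_insert_of_notMem (fun h => v_not_mem_dn v (Finset.filter_subset _ _ h))]
        have hGT : G.card < T.card := by rw [hsplit] at hF; omega
        obtain ⟨z, hzT, hzmax, hzle⟩ := pigeon htree T G hGT
        have hz' : z ∈ tower D (i+1) ∧ z < v := by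
          simpa only [hT, Finset.mem_filter] using hzT
        -- condition for recursion at z
        have hcond : ((dcl z).filter (fun w => c w ∈ F)).card ≤
            ((tower D (i+1)).filter (fun w => w < z)).card := by
          have h1 : (dcl z).filter (fun w => c w ∈ F) ⊆ G.filter (fun w => w ≤ z) := by
            intro w hw
            simp only [Finset.mem_filter, mem_dcl] at hw
            simp only [hG, Finset.mem_filter, mem_dn]
            exact ⟨⟨hw.1.trans_lt hz'.2, hw.2⟩, hw.1⟩
          have h2 : T.filter (fun w => w < z) ⊆ (tower D (i+1)).filter (fun w => w < z) := by
            intro w hw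
            simp only [hT, Finset.mem_filter] at hw
            exact Finset.mem_filter.2 ⟨hw.1.1, hw.2⟩
          calc ((dcl z).filter (fun w => c w ∈ F)).card
              ≤ (G.filter (fun w => w ≤ z)).card := Finset.card_le_card h1
            _ ≤ (T.filter (fun w => w < z)).card := hzle
            _ ≤ ((tower D (i+1)).filter (fun w => w < z)).card := Finset.card_le_card h2
        have hzcard : (dcl z).card ≤ n := by
          have : dcl z ⊆ dn v := by
            intro w hw; exact mem_dn.2 ((mem_dcl.1 hw).trans_lt hz'.2)
          have := Finset.card_le_card this
          omega
        obtain ⟨R, hR1, hR2, hR3, hR4, hR5⟩ := ihn z hzcard hz'.1 F hcond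
        exact ⟨R, hR1, fun x hx => (hR2 x hx).trans hz'.2.le, hR3, hR4, hR5⟩
      · -- Case A: colour of v is free; go down one level and append v
        set F' : Finset (Fin C) := insert (c v) F with hF'
        set G' := (dn v).filter (fun w => c w ∈ F') with hG'
        set T := (tower D i).filter (fun w => w < v) with hT
        have hsame : ((dcl v).filter (fun w => c w ∈ F)).card
            = ((dn v).filter (fun w => c w ∈ F)).card := by
          rw [dcl_eq_insert, Finset.filter_insert, if_neg hcvF]
        have hG'card : G'.card ≤ ((tower D (i+1)).filter (fun w => w < v)).card + D := by
          have hsub : G' ⊆ ((dn v).filter (fun w => c w ∈ F)) ∪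
              ((dn v).filter (fun w => c w = c v)) := by
            intro w hw
            simp only [hG', hF', Finset.mem_filter, Finset.mem_insert] at hw
            rcases hw.2 with h | h
            · exact Finset.mem_union_right _ (Finset.mem_filter.2 ⟨hw.1, h⟩)
            · exact Finset.mem_union_left _ (Finset.mem_filter.2 ⟨hw.1, h⟩)
          calc G'.card ≤ _ := Finset.card_le_card hsub
            _ ≤ ((dn v).filter (fun w => c w ∈ F)).card
                + ((dn v).filter (fun w => c w = c v)).card := Finset.card_union_le _ _
            _ ≤ ((tower D (i+1)).filter (fun w => w < v)).card + D := by
                have := same_color_dn_le hc v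
                rw [← hsame]
                omega
        have hTG : G'.card < T.card := by
          have := tower_card_lower D i hv
          rw [← hT] at this
          omega
        obtain ⟨z, hzT, hzmax, hzle⟩ := pigeon htree T G' hTG
        have hz' : z ∈ tower D i ∧ z < v := by
          simpa only [hT, Finset.mem_filter] using hzT
        have hcond : ((dcl z).filter (fun w => c w ∈ F')).card ≤
            ((tower D i).filter (fun w => w < z)).card := by
          have h1 : (dcl z).filter (fun w => c w ∈ F') ⊆ G'.filter (fun w => w ≤ z) := by
            intro w hw
            simp only [Finset.mem_filter, mem_dcl] at hw
            simp only [hG', Finset.mem_filter, mem_dn]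
            exact ⟨⟨hw.1.trans_lt hz'.2, hw.2⟩, hw.1⟩
          have h2 : T.filter (fun w => w < z) ⊆ (tower D i).filter (fun w => w < z) := by
            intro w hw
            simp only [hT, Finset.mem_filter] at hw
            exact Finset.mem_filter.2 ⟨hw.1.1, hw.2⟩
          calc ((dcl z).filter (fun w => c w ∈ F')).card
              ≤ (G'.filter (fun w => w ≤ z)).card := Finset.card_le_card h1
            _ ≤ (T.filter (fun w => w < z)).card := hzle
            _ ≤ ((tower D i).filter (fun w => w < z)).card := Finset.card_le_card h2
        obtain ⟨R, hR1, hR2, hR3, hR4, hR5⟩ := ih z hz'.1 F' hcond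
        have hvR : v ∉ R := by
          intro h
          exact absurd ((hR2 v h).trans_lt hz'.2) (lt_irrefl v)
        refine ⟨insert v R, ?_, ?_, ?_, ?_, ?_⟩
        · rw [Finset.card_insert_of_notMem hvR, hR1]
        · intro x hx
          rcases Finset.mem_insert.1 hx with rfl | hx
          · exact le_rfl
          · exact (hR2 x hx).trans hz'.2.le
        · intro x hx y hy
          rcases Finset.mem_insert.1 hx with hxv | hx'
          · subst hxv
            rcases Finset.mem_insert.1 hy with hyv | hy'
            · subst hyv; exact Or.inl le_rfl
            · exact Or.inr ((hR2 y hy').trans hz'.2.le)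
          · rcases Finset.mem_insert.1 hy with hyv | hy'
            · subst hyv; exact Or.inl ((hR2 x hx').trans hz'.2.le)
            · exact hR3 x hx' y hy'
        · intro x hx y hy hxy
          rcases Finset.mem_insert.1 hx with hxv | hx'
          · subst hxv
            rcases Finset.mem_insert.1 hy with hyv | hy'
            · subst hyv; rfl
            · exfalso
              apply hR5 y hy'
              rw [hF', ← hxy]
              exact Finset.mem_insert_self _ _
          · rcases Finset.mem_insert.1 hy with hyv | hy'
            · subst hyv
              exfalso
              apply hR5 x hx'
              rw [hF', hxy]
              exact Finset.mem_insert_self _ _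
            · exact hR4 x hx' y hy' hxy
        · intro x hx
          rcases Finset.mem_insert.1 hx with rfl | hx
          · exact hcvF
          · exact fun h => hR5 x hx (Finset.mem_insert_of_mem h)

/-- With colours in `Fin C` the tower dies at level `C`. -/
lemma tower_C_empty (htree : IsTreeOrder V) {C D : ℕ} {c : V → Fin C}
    (hc : IsDefColoring (compGraph V) D c) : (tower D C : Finset V) = ∅ := by
  by_contra hne
  obtain ⟨v, hv⟩ := Finset.nonempty_of_ne_empty hne
  obtain ⟨R, hR1, _, _, hR4, _⟩ := MLS htree hc C v hv ∅ (by simp)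
  have hinj : Set.InjOn c R := fun x hx y hy h => hR4 x hx y hy h
  have h1 : (R.image c).card = R.card := Finset.card_image_of_injOn hinj
  have h2 : (R.image c).card ≤ C := by
    have := Finset.card_le_univ (R.image c)
    simpa using this
  omega

theorem stmt5' {C D : ℕ} (htree : IsTreeOrder V)
    (h : ∃ c : V → Fin C, IsDefColoring (compGraph V) D c) :
    ∃ c : V → Fin C, IsDefColoring (compGraph V) D c ∧
      ∀ u v : V, v ≤ u → c v ≤ c u := by
  obtain ⟨c, hc⟩ := h
  have hSC : (tower D C : Finset V) = ∅ := tower_C_empty htree hc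
  have hex : ∀ v : V, ∃ n, v ∉ tower D n := fun v => ⟨C, by rw [hSC]; simp⟩
  set m : V → ℕ := fun v => Nat.find (hex v) with hm
  have hm_spec : ∀ v : V, v ∉ tower D (m v) := fun v => Nat.find_spec (hex v)
  have hm_min : ∀ v : V, ∀ j, j < m v → v ∈ tower D j := by
    intro v j hj
    by_contra hcon
    exact absurd (Nat.find_min (hex v) hj) (by simpa using hcon)
  have hm_pos : ∀ v : V, 1 ≤ m v := by
    intro v
    by_contra hcon
    push_neg at hcon
    interval_cases h : (m v)
    · exact (hm_spec v) (by rw [h] at *; exact Finset.mem_univ v)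
  have hm_le : ∀ v : V, m v ≤ C := fun v => Nat.find_le (by rw [hSC]; simp)
  have hmem_iff : ∀ (v : V) (j : ℕ), v ∈ tower D j ↔ j < m v := by
    intro v j
    constructor
    · intro hvj
      by_contra hcon
      push_neg at hcon
      exact hm_spec v (tower_anti D hcon hvj)
    · exact hm_min v j
  -- the new colouring
  set c' : V → Fin C := fun v => ⟨m v - 1, by have := hm_le v; have := hm_pos v; omega⟩
    with hc'
  have hc'_eq : ∀ v w : V, c' w = c' v ↔ m w = m v := by
    intro v w
    constructor
    · intro h
      have := Fin.mk.injEq (m w - 1) _ (m v - 1) _ ▸ h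
      have h2 : m w - 1 = m v - 1 := by
        simpa [hc'] using congrArg Fin.val h
      have := hm_pos v; have := hm_pos w
      omega
    · intro h; simp [hc', h]
  have hmono : ∀ u v : V, v ≤ u → c' v ≤ c' u := by
    intro u v hvu
    have h1 : m v ≤ m u := by
      by_contra hcon
      push_neg at hcon
      have : v ∈ tower D (m u) := hm_min v (m u) hcon
      exact hm_spec u (tower_upset D (m u) this hvu)
    simp only [hc', Fin.mk_le_mk]
    omega
  refine ⟨c', ?_, hmono⟩
  -- validity
  intro v
  unfold deficiency
  set i : ℕ := m v - 1 with hi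
  have hvi : v ∈ tower D i := hm_min v i (by have := hm_pos v; omega)
  have hvsucc : v ∉ tower D (i + 1) := by
    have : i + 1 = m v := by have := hm_pos v; omega
    rw [this]; exact hm_spec v
  have hcount : ∀ t : V, t ∉ tower D (i+1) →
      ((tower D i).filter (fun w => w < t)).card ≤ D := by
    intro t ht
    by_contra hcon
    push_neg at hcon
    exact ht (mem_tower_succ.2 hcon)
  set A : Set V := {w | (compGraph V).Adj v w ∧ c' w = c' v} with hA
  have hAelem : ∀ w ∈ A, (w < v ∨ v < w) ∧ m w = m v := by
    intro w hw
    obtain ⟨⟨hne, hcmp⟩, hcol⟩ := hw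
    refine ⟨?_, (hc'_eq v w).1 hcol⟩
    rcases hcmp with h | h
    · exact Or.inr (lt_of_le_of_ne h hne)
    · exact Or.inl (lt_of_le_of_ne h (fun e => hne e.symm))
  by_cases hup : ∃ t : V, v < t ∧ m t = m v
  · -- there is a same-class ancestor; take a maximal one
    set U : Finset V := Finset.univ.filter (fun t => v < t ∧ m t = m v) with hU
    have hUne : U.Nonempty := by
      obtain ⟨t, ht⟩ := hup
      exact ⟨t, by simp [hU, ht.1, ht.2]⟩
    obtain ⟨t, htU, htmax⟩ : ∃ t ∈ U, ∀ x ∈ U, ¬ t < x := by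
      obtain ⟨t, ht⟩ := Finset.exists_maximal hUne
      exact ⟨t, ht.1, fun x hx hlt => hlt.not_ge (ht.2 hx hlt.le)⟩
    have ht' : v < t ∧ m t = m v := by simpa [hU] using htU
    have htsucc : t ∉ tower D (i+1) := by
      rw [hmem_iff]
      have := hm_pos v
      omega
    have hsub : A ⊆ ↑(insert t (((tower D i).filter (fun w => w < t)).erase v)) := by
      intro w hw
      obtain ⟨hcmp, hmw⟩ := hAelem w hw
      have hwi : w ∈ tower D i := by
        rw [hmem_iff]
        have := hm_pos v
        omega
      have hwv : w ≠ v := by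
        rintro rfl
        rcases hcmp with h | h <;> exact absurd h (lt_irrefl w)
      rcases eq_or_ne w t with rfl | hwt
      · simp
      · have hwlt : w < t := by
          rcases hcmp with h | h
          · exact h.trans ht'.1
          · -- both strictly above v, comparable, and t maximal in the class
            rcases comp_of_le_le htree ht'.1.le h.le with h2 | h2
            · rcases eq_or_lt_of_le h2 with rfl | h3
              · exact absurd rfl hwt
              · exact absurd (htmax w (by simp [hU, h, hmw]) h3) (fun q => q)
            · exact lt_of_le_of_ne h2 hwt
        simp only [Finset.coe_insert, Set.mem_insert_iff, Finset.coe_erase, Set.mem_diff]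
        refine Or.inr ⟨?_, by simpa using hwv⟩
        simp only [Finset.mem_coe, Finset.mem_filter]
        exact ⟨hwi, hwlt⟩
    have hvmem : v ∈ (tower D i).filter (fun w => w < t) :=
      Finset.mem_filter.2 ⟨hvi, ht'.1⟩
    have hcard : (insert t (((tower D i).filter (fun w => w < t)).erase v)).card ≤ D := by
      have h1 : (((tower D i).filter (fun w => w < t)).erase v).card
          = ((tower D i).filter (fun w => w < t)).card - 1 :=
        Finset.card_erase_of_mem hvmem
      have h2 := hcount t htsucc
      have h3 := Finset.card_insert_le t (((tower D i).filter (fun w => w < t)).erase v)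
      have h4 : 1 ≤ ((tower D i).filter (fun w => w < t)).card :=
        Finset.card_pos.2 ⟨v, hvmem⟩
      omega
    calc A.ncard ≤ (↑(insert t (((tower D i).filter (fun w => w < t)).erase v)) : Set V).ncard :=
          Set.ncard_le_ncard hsub (Set.toFinite _)
      _ = (insert t (((tower D i).filter (fun w => w < t)).erase v)).card :=
          Set.ncard_coe_finset _
      _ ≤ D := hcard
  · -- no same-class ancestor
    push_neg at hup
    have hsub : A ⊆ ↑((tower D i).filter (fun w => w < v)) := by
      intro w hw
      obtain ⟨hcmp, hmw⟩ := hAelem w hw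
      have hwi : w ∈ tower D i := by
        rw [hmem_iff]
        have := hm_pos v
        omega
      rcases hcmp with h | h
      · simp only [Finset.mem_coe, Finset.mem_filter]
        exact ⟨hwi, h⟩
      · exact absurd hmw (hup w h)
    calc A.ncard ≤ (↑((tower D i).filter (fun w => w < v)) : Set V).ncard :=
          Set.ncard_le_ncard hsub (Set.toFinite _)
      _ = ((tower D i).filter (fun w => w < v)).card := Set.ncard_coe_finset _
      _ ≤ D := hcount v hvsucc

end

/-- If the comparability graph of a tree order admits a `(C,D)`-coloring, then it admits
one that is monotone with respect to the order. -/
theorem stmt5 {V : Type*} [Fintype V] [PartialOrder V] (htree : IsTreeOrder V)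
    (C D : ℕ) (h : ∃ c : V → Fin C, IsDefColoring (compGraph V) D c) :
    ∃ c : V → Fin C, IsDefColoring (compGraph V) D c ∧
      ∀ u v : V, v ≤ u → c v ≤ c u := by
  exact stmt5' htree h
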